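/- Let k ≥ 1 and n ≥ 1 be integers, let p be a prime, and let e ≥ 1 be such that k+1 = p^e. Then ν_p((n-1)^(k̲)) ≥ e - 1, and if ν_p((n-1)^(k̲)) = e - 1 then p ∣ n. -/

import Mathlib

/-- Lemma 2(b). Let `k ≥ 1`, `n ≥ 1`, let `p` be a prime and `e ≥ 1` with
`k+1 = p^e`. Then `ν_p((n-1)^(k̲)) ≥ e - 1`, and if `ν_p((n-1)^(k̲)) = e - 1`
then `p ∣ n`. Here the `p`-adic valuation (with convention `ν_p(0) = ∞`) is
formalised as `emultiplicity p`. -/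
theorem emultiplicity_descFactorial_of_prime_pow
    (k n : ℕ) (hk : 1 ≤ k) (hn : 1 ≤ n) (p : ℕ) (hp : Nat.Prime p)
    (e : ℕ) (he1 : 1 ≤ e) (he : k + 1 = p ^ e) :
    ((e - 1 : ℕ) : ℕ∞) ≤ emultiplicity p ((n - 1).descFactorial k) ∧
      (emultiplicity p ((n - 1).descFactorial k) = ((e - 1 : ℕ) : ℕ∞) → p ∣ n) := by
  have hp1 := hp.one_lt
  -- p ^ (e-1) ≤ k
  have hpe1 : p ^ (e - 1) ≤ k := by
    have h1 : p ^ (e - 1) * 1 < p ^ (e - 1) * p :=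
      Nat.mul_lt_mul_of_le_of_lt (le_refl _) hp1 (Nat.pow_pos (by omega))
    have h2 : p ^ (e - 1) * p = p ^ e := by
      rw [← pow_succ]
      congr 1
      omega
    omega
  -- p ^ (e-1) divides k!
  have hdvd1 : p ^ (e - 1) ∣ Nat.factorial k :=
    Nat.dvd_factorial (Nat.pow_pos (by omega)) hpe1
  have hdvd2 : p ^ (e - 1) ∣ (n - 1).descFactorial k :=
    hdvd1.trans (Nat.factorial_dvd_descFactorial _ _)
  refine ⟨le_emultiplicity_of_pow_dvd hdvd2, ?_⟩
  intro hv
  by_contra hpn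
  -- the descFactorial is nonzero
  have hD0 : (n - 1).descFactorial k ≠ 0 := by
    intro h
    rw [h, emultiplicity_zero] at hv
    exact (ENat.top_ne_coe _) hv
  have hkn : k ≤ n - 1 := by
    by_contra h
    exact hD0 (Nat.descFactorial_eq_zero_iff_lt.2 (by omega))
  -- key identity: n * choose (n-1) k = choose n (k+1) * (k+1)
  have hid : n * Nat.choose (n - 1) k = Nat.choose n (k + 1) * (k + 1) := by
    have := Nat.add_one_mul_choose_eq (n - 1) k
    have hn1 : n - 1 + 1 = n := by omega
    rwa [hn1] at this
  -- p^e divides n * choose (n-1) k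
  have hdvd3 : p ^ e ∣ n * Nat.choose (n - 1) k := by
    rw [hid, ← he]
    exact dvd_mul_left _ _
  have hcop : Nat.Coprime (p ^ e) n :=
    (Nat.Prime.coprime_iff_not_dvd hp |>.2 hpn).pow_left _
  have hdvd4 : p ^ e ∣ Nat.choose (n - 1) k := hcop.dvd_of_dvd_mul_left hdvd3
  have hdvd5 : p ^ e ∣ (n - 1).descFactorial k := by
    rw [Nat.descFactorial_eq_factorial_mul_choose]
    exact hdvd4.mul_left _
  have hle : (e : ℕ∞) ≤ emultiplicity p ((n - 1).descFactorial k) :=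
    le_emultiplicity_of_pow_dvd hdvd5
  rw [hv] at hle
  have : e ≤ e - 1 := by exact_mod_cast hle
  omega
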